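/- If T rewrites to S by a list Ω₊ of child duplication rules π⁺, then h(S) = h(T), w(S) ≤ |Ω₊| + w(T), and n(S) ≤ 2^{|Ω₊|} · n(T) − (2^{|Ω₊|} − 1). -/

import Mathlib

inductive MTree : Type where
  | node : List ℕ → List (ℕ × MTree) → MTree

namespace MTree

mutual
def numNodes : MTree → ℕ
  | .node _ Γ => 1 + numNodesL Γ
def numNodesL : List (ℕ × MTree) → ℕ
  | [] => 0
  | (_, t) :: Γ => numNodes t + numNodesL Γ
end

mutual
def height : MTree → ℕ
  | .node _ [] => 0
  | .node _ (p :: Γ) => heightL (p :: Γ) + 1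
def heightL : List (ℕ × MTree) → ℕ
  | [] => 0
  | (_, t) :: Γ => max (height t) (heightL Γ)
end

mutual
def width : MTree → ℕ
  | .node _ [] => 1
  | .node _ (p :: Γ) => max (p :: Γ).length (widthL (p :: Γ))
def widthL : List (ℕ × MTree) → ℕ
  | [] => 0
  | (_, t) :: Γ => max (width t) (widthL Γ)
end

def sum : MTree → MTree → MTree
  | .node Δ Γ, .node Δ' Γ' => .node (Δ ++ Δ') (Γ ++ Γ')

inductive IsPos : List ℕ → MTree → Prop where
  | nil : ∀ t, IsPos [] t
  | cons : ∀ {Δ : List ℕ} {Γ : List (ℕ × MTree)} {i : ℕ} {k : List ℕ}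
      (h : i < Γ.length), IsPos k (Γ.get ⟨i, h⟩).2 → IsPos (i :: k) (.node Δ Γ)

def subtree : List ℕ → MTree → MTree
  | [], t => t
  | i :: k, .node Δ Γ =>
    match Γ[i]? with
    | some p => subtree k p.2
    | none => .node Δ Γ

def replace : List ℕ → MTree → MTree → MTree
  | [], _, s => s
  | i :: k, .node Δ Γ, s =>
      .node Δ (Γ.modify i (fun p => (p.1, replace k p.2 s)))

inductive RhoPlus : MTree → MTree → Prop where
  | mk : ∀ (Δ : List ℕ) (Γ : List (ℕ × MTree)) (i : ℕ) (h : i < Δ.length),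
      RhoPlus (.node Δ Γ) (.node (Δ.get ⟨i, h⟩ :: Δ) Γ)

inductive RhoMinus : MTree → MTree → Prop where
  | mk : ∀ (Δ : List ℕ) (Γ : List (ℕ × MTree)) (i : ℕ), i < Δ.length →
      RhoMinus (.node Δ Γ) (.node (Δ.eraseIdx i) Γ)

inductive Sigma' : MTree → MTree → Prop where
  | mk : ∀ (Δ : List ℕ) (Γ : List (ℕ × MTree)) (i j : ℕ)
      (hi : i < Γ.length) (hj : j < Γ.length), i ≠ j →
      Sigma' (.node Δ Γ) (.node Δ ((Γ.set i (Γ.get ⟨j, hj⟩)).set j (Γ.get ⟨i, hi⟩)))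

inductive PiPlus : MTree → MTree → Prop where
  | mk : ∀ (Δ : List ℕ) (Γ : List (ℕ × MTree)) (i : ℕ) (h : i < Γ.length),
      PiPlus (.node Δ Γ) (.node Δ (Γ.get ⟨i, h⟩ :: Γ))

inductive PiMinus : MTree → MTree → Prop where
  | mk : ∀ (Δ : List ℕ) (Γ : List (ℕ × MTree)) (i : ℕ), i < Γ.length →
      PiMinus (.node Δ Γ) (.node Δ (Γ.eraseIdx i))

inductive FourR : MTree → MTree → Prop where
  | mk : ∀ (Δ : List ℕ) (Γ : List (ℕ × MTree)) (i : ℕ) (h : i < Γ.length)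
      (β : ℕ) (s : MTree),
      Γ.get ⟨i, h⟩ = (β, .node [] [(β, s)]) →
      FourR (.node Δ Γ) (.node Δ (Γ.set i (β, s)))

inductive MonoR : MTree → MTree → Prop where
  | mk : ∀ (Δ : List ℕ) (Γ : List (ℕ × MTree)) (i : ℕ) (h : i < Γ.length)
      (α β : ℕ) (s : MTree),
      Γ.get ⟨i, h⟩ = (α, s) → β < α →
      MonoR (.node Δ Γ) (.node Δ (Γ.set i (β, s)))

inductive JayR : MTree → MTree → Prop where
  | mk : ∀ (Δ : List ℕ) (Γ : List (ℕ × MTree)) (i j : ℕ)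
      (hi : i < Γ.length) (hj : j < Γ.length)
      (α β : ℕ) (Δ' : List ℕ) (Γ' : List (ℕ × MTree)) (s : MTree),
      i ≠ j → Γ.get ⟨i, hi⟩ = (α, .node Δ' Γ') → Γ.get ⟨j, hj⟩ = (β, s) → β < α →
      JayR (.node Δ Γ)
        (.node Δ ((Γ.set i (α, .node Δ' (Γ' ++ [(β, s)]))).eraseIdx j))

inductive Ax : Type where
  | four | mono | jay
deriving DecidableEq

def axRule : Ax → MTree → MTree → Prop
  | .four => FourR
  | .mono => MonoR
  | .jay  => JayR

def rootStep (A : Set Ax) (t t' : MTree) : Prop :=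
  RhoPlus t t' ∨ RhoMinus t t' ∨ Sigma' t t' ∨ PiPlus t t' ∨ PiMinus t t' ∨
    ∃ a ∈ A, axRule a t t'

def deepStep (R : MTree → MTree → Prop) (t t' : MTree) : Prop :=
  ∃ k s', IsPos k t ∧ R (subtree k t) s' ∧ t' = replace k t s'

def Rw (A : Set Ax) : MTree → MTree → Prop :=
  Relation.ReflTransGen (deepStep (rootStep A))

end MTree

inductive SPF : Type where
  | top
  | var : ℕ → SPF
  | dia : ℕ → SPF → SPF
  | and : SPF → SPF → SPF

namespace SPF

def md : SPF → ℕ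
  | .top => 0
  | .var _ => 0
  | .dia _ φ => φ.md + 1
  | .and φ ψ => max φ.md ψ.md

def bigAnd : List SPF → SPF
  | [] => .top
  | φ :: l => .and φ (bigAnd l)

def toTree : SPF → MTree
  | .top => .node [] []
  | .var p => .node [p] []
  | .dia α φ => .node [] [(α, toTree φ)]
  | .and φ ψ => (toTree φ).sum (toTree ψ)

end SPF

namespace MTree
mutual
def toForm : MTree → SPF
  | .node Δ Γ => .and (SPF.bigAnd (Δ.map .var)) (toFormL Γ)
def toFormL : List (ℕ × MTree) → SPF
  | [] => .top
  | (α, t) :: Γ => .and (.dia α (toForm t)) (toFormL Γ)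
end
end MTree

inductive Deriv (A : Set MTree.Ax) : SPF → SPF → Prop where
  | refl (φ) : Deriv A φ φ
  | top (φ) : Deriv A φ .top
  | trans {φ ψ χ} : Deriv A φ ψ → Deriv A ψ χ → Deriv A φ χ
  | andE1 (φ ψ) : Deriv A (.and φ ψ) φ
  | andE2 (φ ψ) : Deriv A (.and φ ψ) ψ
  | andI {φ ψ χ} : Deriv A φ ψ → Deriv A φ χ → Deriv A φ (.and ψ χ)
  | dist {φ ψ} (α : ℕ) : Deriv A φ ψ → Deriv A (.dia α φ) (.dia α ψ)
  | four (α : ℕ) (φ) : MTree.Ax.four ∈ A → Deriv A (.dia α (.dia α φ)) (.dia α φ)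
  | mono (α β : ℕ) (φ) : MTree.Ax.mono ∈ A → β < α → Deriv A (.dia α φ) (.dia β φ)
  | jay (α β : ℕ) (φ ψ) : MTree.Ax.jay ∈ A → β < α →
      Deriv A (.and (.dia α φ) (.dia β ψ)) (.dia α (.and φ (.dia β ψ)))

inductive RuleKind : Type where
  | rhoP | rhoM | sigma | piP | piM | four | mono | jay
deriving DecidableEq

def RuleKind.rel : RuleKind → MTree → MTree → Prop
  | .rhoP => MTree.RhoPlus
  | .rhoM => MTree.RhoMinus
  | .sigma => MTree.Sigma'
  | .piP => MTree.PiPlus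
  | .piM => MTree.PiMinus
  | .four => MTree.FourR
  | .mono => MTree.MonoR
  | .jay => MTree.JayR

def listRw : List RuleKind → MTree → MTree → Prop
  | [], t, s => t = s
  | μ :: Ω, t, s => ∃ u, MTree.deepStep μ.rel t u ∧ listRw Ω u s


namespace MTree

theorem one_le_numNodes : ∀ t : MTree, 1 ≤ t.numNodes
  | .node _ Γ => by rw [numNodes]; omega

theorem numNodesL_cons (p : ℕ × MTree) (Γ : List (ℕ × MTree)) :
    numNodesL (p :: Γ) = numNodes p.2 + numNodesL Γ := by
  cases p; rw [numNodesL]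

theorem heightL_cons (p : ℕ × MTree) (Γ : List (ℕ × MTree)) :
    heightL (p :: Γ) = max (height p.2) (heightL Γ) := by
  cases p; rw [heightL]

theorem widthL_cons (p : ℕ × MTree) (Γ : List (ℕ × MTree)) :
    widthL (p :: Γ) = max (width p.2) (widthL Γ) := by
  cases p; rw [widthL]

theorem height_node_ne {Δ : List ℕ} {Γ : List (ℕ × MTree)} (h : Γ ≠ []) :
    height (MTree.node Δ Γ) = heightL Γ + 1 := by
  cases Γ with
  | nil => exact absurd rfl h
  | cons p Γ => rw [height]

theorem width_node_ne {Δ : List ℕ} {Γ : List (ℕ × MTree)} (h : Γ ≠ []) :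
    width (MTree.node Δ Γ) = max Γ.length (widthL Γ) := by
  cases Γ with
  | nil => exact absurd rfl h
  | cons p Γ => rw [width]

theorem numNodes_get_le (Γ : List (ℕ × MTree)) :
    ∀ (i : ℕ) (hi : i < Γ.length), numNodes (Γ.get ⟨i, hi⟩).2 ≤ numNodesL Γ := by
  induction Γ with
  | nil => intro i hi; simp at hi
  | cons p Γ ih =>
    intro i hi
    cases i with
    | zero => simp [numNodesL_cons]
    | succ i =>
      have := ih i (by simpa using hi)
      simp only [List.get_cons_succ]
      rw [numNodesL_cons]; omega

theorem height_get_le (Γ : List (ℕ × MTree)) :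
    ∀ (i : ℕ) (hi : i < Γ.length), height (Γ.get ⟨i, hi⟩).2 ≤ heightL Γ := by
  induction Γ with
  | nil => intro i hi; simp at hi
  | cons p Γ ih =>
    intro i hi
    cases i with
    | zero => simp [heightL_cons]
    | succ i =>
      have := ih i (by simpa using hi)
      simp only [List.get_cons_succ]
      rw [heightL_cons]; omega

theorem width_get_le (Γ : List (ℕ × MTree)) :
    ∀ (i : ℕ) (hi : i < Γ.length), width (Γ.get ⟨i, hi⟩).2 ≤ widthL Γ := by
  induction Γ with
  | nil => intro i hi; simp at hi
  | cons p Γ ih =>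
    intro i hi
    cases i with
    | zero => simp [widthL_cons]
    | succ i =>
      have := ih i (by simpa using hi)
      simp only [List.get_cons_succ]
      rw [widthL_cons]; omega

theorem numNodesL_modify (f : ℕ × MTree → ℕ × MTree) (Γ : List (ℕ × MTree)) :
    ∀ (i : ℕ) (hi : i < Γ.length),
      numNodesL (Γ.modify i f) + numNodes (Γ.get ⟨i, hi⟩).2
        = numNodesL Γ + numNodes (f (Γ.get ⟨i, hi⟩)).2 := by
  induction Γ with
  | nil => intro i hi; simp at hi
  | cons p Γ ih =>
    intro i hi
    cases i with
    | zero =>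
      simp only [List.modify_zero_cons, List.get]
      rw [numNodesL_cons, numNodesL_cons]; omega
    | succ i =>
      have := ih i (by simpa using hi)
      simp only [List.modify_succ_cons, List.get_cons_succ] at *
      rw [numNodesL_cons, numNodesL_cons]; omega

theorem heightL_modify (f : ℕ × MTree → ℕ × MTree) (Γ : List (ℕ × MTree)) :
    ∀ (i : ℕ) (hi : i < Γ.length),
      height (f (Γ.get ⟨i, hi⟩)).2 = height (Γ.get ⟨i, hi⟩).2 →
      heightL (Γ.modify i f) = heightL Γ := by
  induction Γ with
  | nil => intro i hi; simp at hi
  | cons p Γ ih =>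
    intro i hi
    cases i with
    | zero =>
      intro h
      simp only [List.modify_zero_cons, List.get] at *
      rw [heightL_cons, heightL_cons, h]
    | succ i =>
      intro h
      have := ih i (by simpa using hi) (by simpa using h)
      simp only [List.modify_succ_cons] at *
      rw [heightL_cons, heightL_cons, this]

theorem widthL_modify (f : ℕ × MTree → ℕ × MTree) (Γ : List (ℕ × MTree)) :
    ∀ (i : ℕ) (hi : i < Γ.length),
      width (f (Γ.get ⟨i, hi⟩)).2 ≤ width (Γ.get ⟨i, hi⟩).2 + 1 →
      widthL (Γ.modify i f) ≤ widthL Γ + 1 := by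
  induction Γ with
  | nil => intro i hi; simp at hi
  | cons p Γ ih =>
    intro i hi
    cases i with
    | zero =>
      intro h
      simp only [List.modify_zero_cons, List.get] at *
      rw [widthL_cons, widthL_cons]; omega
    | succ i =>
      intro h
      have := ih i (by simpa using hi) (by simpa using h)
      simp only [List.modify_succ_cons] at *
      rw [widthL_cons, widthL_cons]; omega

theorem step_piP : ∀ {k : List ℕ} {t : MTree}, IsPos k t → ∀ {s' : MTree},
    PiPlus (subtree k t) s' →
    height (replace k t s') = height t ∧ width (replace k t s') ≤ width t + 1 ∧
    numNodes (replace k t s') + 1 ≤ 2 * numNodes t := by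
  intro k t hpos
  induction hpos with
  | nil t =>
    intro s' hp
    cases hp with
    | mk Δ Γ i h =>
      have hne : Γ ≠ [] := by intro he; subst he; simp at h
      have hne2 : (Γ.get ⟨i, h⟩ :: Γ) ≠ [] := by simp
      refine ⟨?_, ?_, ?_⟩
      · rw [replace, height_node_ne hne2, height_node_ne hne, heightL_cons]
        have := height_get_le Γ i h
        omega
      · rw [replace, width_node_ne hne2, width_node_ne hne, widthL_cons]
        have := width_get_le Γ i h
        simp only [List.length_cons]
        omega
      · rw [replace, numNodes, numNodes, numNodesL_cons]
        have := numNodes_get_le Γ i h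
        omega
  | @cons Δ Γ i k h hk ih =>
    intro s' hp
    have hsub : subtree (i :: k) (MTree.node Δ Γ) = subtree k (Γ.get ⟨i, h⟩).2 := by
      rw [subtree, List.getElem?_eq_getElem h]
      rfl
    rw [hsub] at hp
    obtain ⟨ih1, ih2, ih3⟩ := ih hp
    set f : ℕ × MTree → ℕ × MTree := fun p => (p.1, replace k p.2 s') with hf
    have hrep : replace (i :: k) (MTree.node Δ Γ) s'
        = MTree.node Δ (Γ.modify i f) := by rw [replace]
    have hne : Γ ≠ [] := by intro he; subst he; simp at h
    have hlen : (Γ.modify i f).length = Γ.length := by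
      simp
    have hne2 : (Γ.modify i f) ≠ [] := by
      intro he
      rw [he] at hlen
      cases Γ with
      | nil => exact hne rfl
      | cons p Γ => simp at hlen
    have hfh : height (f (Γ.get ⟨i, h⟩)).2 = height (Γ.get ⟨i, h⟩).2 := ih1
    have hfw : width (f (Γ.get ⟨i, h⟩)).2 ≤ width (Γ.get ⟨i, h⟩).2 + 1 := ih2
    refine ⟨?_, ?_, ?_⟩
    · rw [hrep, height_node_ne hne2, height_node_ne hne,
        heightL_modify f Γ i h hfh]
    · rw [hrep, width_node_ne hne2, width_node_ne hne, hlen]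
      have := widthL_modify f Γ i h hfw
      omega
    · rw [hrep, numNodes, numNodes]
      have h1 := numNodesL_modify f Γ i h
      have h2 := numNodes_get_le Γ i h
      have h3 : numNodes (f (Γ.get ⟨i, h⟩)).2 + 1 ≤ 2 * numNodes (Γ.get ⟨i, h⟩).2 := ih3
      omega

theorem listRw_piP : ∀ (Ω : List RuleKind), (∀ μ ∈ Ω, μ = RuleKind.piP) →
    ∀ (t s : MTree), listRw Ω t s →
    s.height = t.height ∧ s.width ≤ Ω.length + t.width ∧
    s.numNodes + 2 ^ Ω.length ≤ 2 ^ Ω.length * t.numNodes + 1 := by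
  intro Ω
  induction Ω with
  | nil =>
    intro _ t s hts
    cases hts
    exact ⟨rfl, by simp, by simp⟩
  | cons μ Ω ih =>
    intro hΩ t s hts
    obtain ⟨u, hstep, hrw⟩ := hts
    have hμ : μ = RuleKind.piP := hΩ μ (by simp)
    subst hμ
    obtain ⟨k, s', hpos, hps, hu⟩ := hstep
    have hps' : MTree.PiPlus (subtree k t) s' := hps
    obtain ⟨h1, h2, h3⟩ := step_piP hpos hps'
    subst hu
    obtain ⟨g1, g2, g3⟩ := ih (fun μ hm => hΩ μ (by simp [hm])) _ s hrw
    refine ⟨g1.trans h1, by simp only [List.length_cons]; omega, ?_⟩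
    simp only [List.length_cons, pow_succ]
    have hmul : 2 ^ Ω.length * (replace k t s').numNodes + 2 ^ Ω.length
        ≤ 2 ^ Ω.length * (2 * t.numNodes) := by
      calc 2 ^ Ω.length * (replace k t s').numNodes + 2 ^ Ω.length
          = 2 ^ Ω.length * ((replace k t s').numNodes + 1) := by ring
        _ ≤ 2 ^ Ω.length * (2 * t.numNodes) :=
            Nat.mul_le_mul_left _ h3
    have : 2 ^ Ω.length * (2 * t.numNodes) = 2 ^ Ω.length * 2 * t.numNodes := by ring
    omega

end MTree

theorem stmt19 (Ω : List RuleKind) (hΩ : ∀ μ ∈ Ω, μ = RuleKind.piP)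
    (t s : MTree) (h : listRw Ω t s) :
    s.height = t.height ∧ s.width ≤ Ω.length + t.width ∧
    s.numNodes ≤ 2 ^ Ω.length * t.numNodes - (2 ^ Ω.length - 1) := by
  obtain ⟨h1, h2, h3⟩ := MTree.listRw_piP Ω hΩ t s h
  refine ⟨h1, h2, ?_⟩
  have hp : 1 ≤ 2 ^ Ω.length := Nat.one_le_two_pow
  omega
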